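/- Let G be the group of invertible upper triangular n×n matrices over ℚ_p and U the subgroup of upper unipotent matrices (triangular with all diagonal entries 1). For A = (a_ij) ∈ U define ‖A‖ = max over all pairs i < j of |a_ij|_p^{1/(j-i)}. Then ‖·‖ is an ultralength on U: ‖1‖ = 0, ‖A⁻¹‖ = ‖A‖, and ‖AB‖ ≤ max(‖A‖, ‖B‖) for all A, B ∈ U. -/

import Mathlib

open scoped Matrix

/-- Upper unipotent matrix: upper triangular with all diagonal entries `1`. -/
def IsUpperUnipotent {p : ℕ} [Fact p.Prime] {n : ℕ}
    (M : Matrix (Fin n) (Fin n) ℚ_[p]) : Prop :=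
  (∀ i j : Fin n, (j : ℕ) < (i : ℕ) → M i j = 0) ∧ ∀ i : Fin n, M i i = 1

/-- `‖A‖ = max_{i<j} |a_{ij}|_p^{1/(j-i)}` for an upper unipotent matrix `A`. -/
noncomputable def unorm {p : ℕ} [Fact p.Prime] {n : ℕ}
    (M : Matrix (Fin n) (Fin n) ℚ_[p]) : ℝ :=
  ⨆ q : Fin n × Fin n,
    if (q.1 : ℕ) < (q.2 : ℕ)
    then ‖M q.1 q.2‖ ^ ((((q.2 : ℕ) : ℝ) - ((q.1 : ℕ) : ℝ))⁻¹)
    else 0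

section Aux
variable {p : ℕ} [Fact p.Prime] {n : ℕ}

private lemma unorm_nonneg' (M : Matrix (Fin n) (Fin n) ℚ_[p]) : 0 ≤ unorm M := by
  apply Real.iSup_nonneg
  intro q
  split_ifs
  · exact Real.rpow_nonneg (norm_nonneg _) _
  · exact le_rfl

private lemma entry_le_unorm (M : Matrix (Fin n) (Fin n) ℚ_[p]) {i j : Fin n}
    (h : (i : ℕ) < (j : ℕ)) : ‖M i j‖ ≤ unorm M ^ ((j : ℕ) - (i : ℕ)) := by
  have hterm : ‖M i j‖ ^ ((((j : ℕ) : ℝ) - ((i : ℕ) : ℝ))⁻¹) ≤ unorm M := by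
    have := le_ciSup (f := fun q : Fin n × Fin n =>
      if (q.1 : ℕ) < (q.2 : ℕ)
      then ‖M q.1 q.2‖ ^ ((((q.2 : ℕ) : ℝ) - ((q.1 : ℕ) : ℝ))⁻¹)
      else 0) (Set.Finite.bddAbove (Set.finite_range _)) (i, j)
    simpa [h, unorm] using this
  have hd : (0 : ℝ) < ((j : ℕ) : ℝ) - ((i : ℕ) : ℝ) := by
    have : ((i : ℕ) : ℝ) < ((j : ℕ) : ℝ) := by exact_mod_cast h
    linarith
  have key : (‖M i j‖ ^ ((((j : ℕ) : ℝ) - ((i : ℕ) : ℝ))⁻¹)) ^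
      (((j : ℕ) : ℝ) - ((i : ℕ) : ℝ)) ≤ unorm M ^ (((j : ℕ) : ℝ) - ((i : ℕ) : ℝ)) :=
    Real.rpow_le_rpow (Real.rpow_nonneg (norm_nonneg _) _) hterm hd.le
  rw [Real.rpow_inv_rpow (norm_nonneg _) hd.ne'] at key
  calc ‖M i j‖ ≤ unorm M ^ (((j : ℕ) : ℝ) - ((i : ℕ) : ℝ)) := key
    _ = unorm M ^ ((j : ℕ) - (i : ℕ)) := by
        rw [← Real.rpow_natCast (unorm M) ((j : ℕ) - (i : ℕ))]
        congr 1
        rw [Nat.cast_sub h.le]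

private lemma unorm_le_of_entries (M : Matrix (Fin n) (Fin n) ℚ_[p]) {c : ℝ} (hc : 0 ≤ c)
    (h : ∀ i j : Fin n, (i : ℕ) < (j : ℕ) → ‖M i j‖ ≤ c ^ ((j : ℕ) - (i : ℕ))) :
    unorm M ≤ c := by
  apply Real.iSup_le _ hc
  rintro ⟨i, j⟩
  dsimp only
  split_ifs with hij
  · have hd : (0 : ℝ) < ((j : ℕ) : ℝ) - ((i : ℕ) : ℝ) := by
      have : ((i : ℕ) : ℝ) < ((j : ℕ) : ℝ) := by exact_mod_cast hij
      linarith
    have h1 : ‖M i j‖ ≤ c ^ (((j : ℕ) : ℝ) - ((i : ℕ) : ℝ)) := by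
      calc ‖M i j‖ ≤ c ^ ((j : ℕ) - (i : ℕ)) := h i j hij
        _ = c ^ (((j : ℕ) : ℝ) - ((i : ℕ) : ℝ)) := by
            rw [← Real.rpow_natCast c ((j : ℕ) - (i : ℕ))]
            congr 1
            rw [Nat.cast_sub hij.le]
    calc ‖M i j‖ ^ ((((j : ℕ) : ℝ) - ((i : ℕ) : ℝ))⁻¹)
        ≤ (c ^ (((j : ℕ) : ℝ) - ((i : ℕ) : ℝ))) ^ ((((j : ℕ) : ℝ) - ((i : ℕ) : ℝ))⁻¹) :=
          Real.rpow_le_rpow (norm_nonneg _) h1 (by positivity)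
      _ = c := Real.rpow_rpow_inv hc hd.ne'
  · exact hc

/-- strictly upper triangular -/
private def SU (M : Matrix (Fin n) (Fin n) ℚ_[p]) : Prop :=
  ∀ i j : Fin n, (j : ℕ) ≤ (i : ℕ) → M i j = 0

/-- entrywise geometric bound -/
private def Bd (c : ℝ) (M : Matrix (Fin n) (Fin n) ℚ_[p]) : Prop :=
  ∀ i j : Fin n, (i : ℕ) < (j : ℕ) → ‖M i j‖ ≤ c ^ ((j : ℕ) - (i : ℕ))

private lemma su_bd_mul {c : ℝ} (hc : 0 ≤ c) {M P : Matrix (Fin n) (Fin n) ℚ_[p]}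
    (hM : SU M) (hP : SU P) (hMb : Bd c M) (hPb : Bd c P) :
    SU (M * P) ∧ Bd c (M * P) := by
  constructor
  · intro i j hji
    rw [Matrix.mul_apply]
    apply Finset.sum_eq_zero
    intro k _
    rcases le_or_gt (k : ℕ) (i : ℕ) with hk | hk
    · rw [hM i k hk, zero_mul]
    · rw [hP k j (hji.trans hk.le), mul_zero]
  · intro i j hij
    rw [Matrix.mul_apply]
    apply IsUltrametricDist.norm_sum_le_of_forall_le_of_nonneg (by positivity)
    intro k _
    rcases le_or_gt (k : ℕ) (i : ℕ) with hk | hk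
    · rw [hM i k hk, zero_mul, norm_zero]; positivity
    rcases le_or_gt (j : ℕ) (k : ℕ) with hk2 | hk2
    · rw [hP k j hk2, mul_zero, norm_zero]; positivity
    · rw [norm_mul]
      calc ‖M i k‖ * ‖P k j‖ ≤ c ^ ((k : ℕ) - (i : ℕ)) * c ^ ((j : ℕ) - (k : ℕ)) :=
          mul_le_mul (hMb i k hk) (hPb k j hk2) (norm_nonneg _) (by positivity)
        _ = c ^ ((j : ℕ) - (i : ℕ)) := by
            rw [← pow_add]; congr 1; omega

private lemma su_bd_pow {c : ℝ} (hc : 0 ≤ c) {N : Matrix (Fin n) (Fin n) ℚ_[p]}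
    (hN : SU N) (hNb : Bd c N) (k : ℕ) : SU (N ^ (k + 1)) ∧ Bd c (N ^ (k + 1)) := by
  induction k with
  | zero => simpa using ⟨hN, hNb⟩
  | succ m ih =>
      rw [pow_succ]
      exact su_bd_mul hc ih.1 hN ih.2 hNb

private lemma su_pow_entry {N : Matrix (Fin n) (Fin n) ℚ_[p]} (hN : SU N) :
    ∀ (k : ℕ) (i j : Fin n), (j : ℕ) < (i : ℕ) + k → (N ^ k) i j = 0 := by
  intro k
  induction k with
  | zero =>
      intro i j hj
      rw [pow_zero]
      exact Matrix.one_apply_ne (by omega : i ≠ j)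
  | succ m ih =>
      intro i j hj
      rw [pow_succ, Matrix.mul_apply]
      apply Finset.sum_eq_zero
      intro m' _
      rcases lt_or_ge (m' : ℕ) ((i : ℕ) + m) with hm | hm
      · rw [ih i m' hm, zero_mul]
      · rw [hN m' j (by omega), mul_zero]

private lemma su_pow_n {N : Matrix (Fin n) (Fin n) ℚ_[p]} (hN : SU N) : N ^ n = 0 := by
  ext i j
  rw [su_pow_entry hN n i j (by omega)]
  rfl

end Aux

section Main
variable {p : ℕ} [Fact p.Prime] {n : ℕ}

private lemma inv_aux (A : Matrix (Fin n) (Fin n) ℚ_[p]) (hA : IsUpperUnipotent A) :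
    IsUpperUnipotent A⁻¹ ∧ A⁻¹⁻¹ = A ∧ unorm A⁻¹ ≤ unorm A := by
  set c := unorm A with hc
  have hc0 : 0 ≤ c := unorm_nonneg' A
  set N : Matrix (Fin n) (Fin n) ℚ_[p] := 1 - A with hNdef
  have hNsu : SU N := by
    intro i j hji
    rcases eq_or_lt_of_le hji with h | h
    · have : j = i := Fin.ext h
      subst this
      simp [hNdef, hA.2 j]
    · have h1 : (1 : Matrix (Fin n) (Fin n) ℚ_[p]) i j = 0 :=
        Matrix.one_apply_ne (Fin.ne_of_val_ne (ne_of_gt h))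
      simp [hNdef, h1, hA.1 i j h]
  have hNb : Bd c N := by
    intro i j hij
    have : N i j = -A i j := by
      simp [hNdef, Matrix.one_apply_ne (Fin.ne_of_val_ne (by omega : (i : ℕ) ≠ (j : ℕ)))]
    rw [this, norm_neg]
    exact entry_le_unorm A hij
  set B : Matrix (Fin n) (Fin n) ℚ_[p] := ∑ k ∈ Finset.range n, N ^ k with hBdef
  have hAB : A * B = 1 := by
    have h1 : (N - 1) * B = N ^ n - 1 := mul_geom_sum N n
    have h3 : N - 1 = -A := by rw [hNdef]; abel
    have h4 : -(A * B) = -1 := by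
      rw [← neg_mul, ← h3, h1, su_pow_n hNsu]; simp
    exact neg_inj.mp h4
  have hBA : B * A = 1 := mul_eq_one_comm.mp hAB
  have hinv : A⁻¹ = B := Matrix.inv_eq_right_inv hAB
  have hBinv : B⁻¹ = A := Matrix.inv_eq_right_inv hBA
  have hBentry : ∀ i j : Fin n, B i j = ∑ k ∈ Finset.range n, (N ^ k) i j := by
    intro i j
    rw [hBdef, Matrix.sum_apply]
  have hBuni : IsUpperUnipotent B := by
    constructor
    · intro i j hji
      rw [hBentry]
      apply Finset.sum_eq_zero
      intro k _
      exact su_pow_entry hNsu k i j (by omega)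
    · intro i
      rw [hBentry]
      rw [Finset.sum_eq_single_of_mem 0 (Finset.mem_range.mpr i.pos)]
      · rw [pow_zero, Matrix.one_apply_eq]
      · intro k _ hk
        exact su_pow_entry hNsu k i i (by omega)
  have hBle : unorm B ≤ c := by
    apply unorm_le_of_entries B hc0
    intro i j hij
    rw [hBentry]
    apply IsUltrametricDist.norm_sum_le_of_forall_le_of_nonneg (by positivity)
    intro k _
    cases k with
    | zero =>
        rw [pow_zero, Matrix.one_apply_ne (Fin.ne_of_val_ne (by omega : (i : ℕ) ≠ (j : ℕ))),
          norm_zero]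
        positivity
    | succ m => exact (su_bd_pow hc0 hNsu hNb m).2 i j hij
  rw [hinv]
  exact ⟨hBuni, hBinv, hBle⟩

end Main

/-- `unorm` is an ultralength on the group `U` of upper unipotent matrices over `ℚ_p`:
`‖1‖ = 0`, `‖A⁻¹‖ = ‖A‖` and `‖AB‖ ≤ max (‖A‖) (‖B‖)`. -/
theorem unorm_is_ultralength (p : ℕ) [Fact p.Prime] (n : ℕ) :
    unorm (1 : Matrix (Fin n) (Fin n) ℚ_[p]) = 0 ∧
    (∀ A : Matrix (Fin n) (Fin n) ℚ_[p], IsUpperUnipotent A → unorm A⁻¹ = unorm A) ∧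
    (∀ A B : Matrix (Fin n) (Fin n) ℚ_[p], IsUpperUnipotent A → IsUpperUnipotent B →
      unorm (A * B) ≤ max (unorm A) (unorm B)) := by
  refine ⟨?_, ?_, ?_⟩
  · refine le_antisymm (Real.iSup_le ?_ le_rfl) (unorm_nonneg' _)
    rintro ⟨i, j⟩
    dsimp only
    split_ifs with h
    · rw [Matrix.one_apply_ne (Fin.ne_of_val_ne (by omega : (i : ℕ) ≠ (j : ℕ))), norm_zero,
        Real.zero_rpow]
      intro hz
      have : ((i : ℕ) : ℝ) < ((j : ℕ) : ℝ) := by exact_mod_cast h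
      rw [inv_eq_zero, sub_eq_zero] at hz
      linarith [hz]
    · exact le_rfl
  · intro A hA
    obtain ⟨hu, hii, hle⟩ := inv_aux A hA
    refine le_antisymm hle ?_
    have := (inv_aux A⁻¹ hu).2.2
    rwa [hii] at this
  · intro A B hA hB
    set c := max (unorm A) (unorm B) with hc
    have hc0 : 0 ≤ c := le_trans (unorm_nonneg' A) (le_max_left _ _)
    have key : ∀ (M : Matrix (Fin n) (Fin n) ℚ_[p]), IsUpperUnipotent M → unorm M ≤ c →
        ∀ i k : Fin n, (i : ℕ) ≤ (k : ℕ) → ‖M i k‖ ≤ c ^ ((k : ℕ) - (i : ℕ)) := by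
      intro M hM hMc i k hik
      rcases eq_or_lt_of_le hik with h | h
      · have : i = k := Fin.ext h
        subst this
        simp [hM.2 i]
      · exact (entry_le_unorm M h).trans (pow_le_pow_left₀ (unorm_nonneg' M) hMc _)
    apply unorm_le_of_entries _ hc0
    intro i j hij
    rw [Matrix.mul_apply]
    apply IsUltrametricDist.norm_sum_le_of_forall_le_of_nonneg (by positivity)
    intro k _
    rcases lt_or_ge (k : ℕ) (i : ℕ) with hk | hk
    · rw [hA.1 i k hk, zero_mul, norm_zero]; positivity
    rcases lt_or_ge (j : ℕ) (k : ℕ) with hk2 | hk2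
    · rw [hB.1 k j hk2, mul_zero, norm_zero]; positivity
    rw [norm_mul]
    calc ‖A i k‖ * ‖B k j‖ ≤ c ^ ((k : ℕ) - (i : ℕ)) * c ^ ((j : ℕ) - (k : ℕ)) :=
        mul_le_mul (key A hA (le_max_left _ _) i k hk) (key B hB (le_max_right _ _) k j hk2)
          (norm_nonneg _) (by positivity)
      _ = c ^ ((j : ℕ) - (i : ℕ)) := by rw [← pow_add]; congr 1; omega
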